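/- Let G be a directed graph with maximum out-degree φ ≥ 1 and let there be k agents. For any valid configuration 𝒜 (an injective map from the agent set to vertices), the number of valid configurations 𝒜* with d(𝒜*,𝒜) = h (where the distance between configurations is the sum over agents p of d(𝒜*(p),𝒜(p))) is at most ((h+k-1)! / (h!·(k-1)!))·φ^h. -/

import Mathlib

/-- `stepsTo E n v u` : there is a directed walk of length `n` from `v` to `u`. -/
def stepsTo {V : Type*} (E : V → V → Prop) : ℕ → V → V → Prop
  | 0 => fun v u => v = u
  | n + 1 => fun v u => ∃ w, E v w ∧ stepsTo E n w u

/-- `gdist E v u` : length of a shortest directed path from `v` to `u`. -/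
noncomputable def gdist {V : Type*} (E : V → V → Prop) (v u : V) : ℕ :=
  sInf {n | stepsTo E n v u}

/-- with `k` agents on a digraph of max out-degree `φ ≥ 1`, assuming the
single-vertex border bound (`# vertices at distance exactly m from w ≤ φ^m`), for any valid
(injective) configuration `A`, the number of valid configurations `B` with
`d(B,A) = Σ_p d(B p, A p) = h` is at most `((h+k-1)!/(h!·(k-1)!))·φ^h`.
Here `d(B p, A p)` is the shortest-path length from `A p` to `B p`. -/
theorem card_configs_at_distance {V P : Type*} [Fintype V] [Fintype P]
    (E : V → V → Prop) (φ k h : ℕ) (hφ : 1 ≤ φ) (hk : 1 ≤ k)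
    (hcard : Fintype.card P = k)
    (hball : ∀ (w : V) (m : ℕ), {u : V | gdist E w u = m}.ncard ≤ φ ^ m)
    (A : P → V) (hA : Function.Injective A) :
    (({B : P → V | Function.Injective B ∧ ∑ p, gdist E (A p) (B p) = h}.ncard : ℝ))
      ≤ ((Nat.factorial (h + k - 1) : ℝ) /
          ((Nat.factorial h : ℝ) * (Nat.factorial (k - 1) : ℝ))) * (φ : ℝ) ^ h := by
  classical
  set g : (P → V) → (P → ℕ) := fun B p => gdist E (A p) (B p) with hg
  set T : Finset (P → V) :=
    Finset.univ.filter (fun B => ∑ p, gdist E (A p) (B p) = h) with hT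
  -- the set in question is contained in T
  have h1 : ({B : P → V | Function.Injective B ∧ ∑ p, gdist E (A p) (B p) = h}).ncard
      ≤ T.card := by
    have hsub : {B : P → V | Function.Injective B ∧ ∑ p, gdist E (A p) (B p) = h}
        ⊆ (↑T : Set (P → V)) := by
      intro B hB
      simp only [hT, Finset.coe_filter, Finset.mem_univ, Set.mem_setOf_eq, true_and]
      exact hB.2
    calc _ ≤ (↑T : Set (P → V)).ncard := Set.ncard_le_ncard hsub T.finite_toSet
      _ = T.card := Set.ncard_coe_finset T
  -- fiberwise counting over the distance-vector map g
  have hfib : ∀ f ∈ T.image g, (T.filter (fun B => g B = f)).card ≤ φ ^ h := by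
    intro f hf
    obtain ⟨B0, hB0, rfl⟩ := Finset.mem_image.mp hf
    have hsum : ∑ p, g B0 p = h := (Finset.mem_filter.mp hB0).2
    have hsub : T.filter (fun B => g B = g B0)
        ⊆ Fintype.piFinset (fun p => {u : V | gdist E (A p) u = g B0 p}.toFinset) := by
      intro B hB
      rw [Fintype.mem_piFinset]
      intro p
      rw [Set.mem_toFinset]
      have h2 := (Finset.mem_filter.mp hB).2
      have := congrFun h2 p
      simpa [hg] using this
    calc (T.filter (fun B => g B = g B0)).card
        ≤ (Fintype.piFinset (fun p => {u : V | gdist E (A p) u = g B0 p}.toFinset)).card :=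
          Finset.card_le_card hsub
      _ = ∏ p, ({u : V | gdist E (A p) u = g B0 p}.toFinset).card :=
          Fintype.card_piFinset _
      _ ≤ ∏ p, φ ^ (g B0 p) := by
          apply Finset.prod_le_prod
          · intro p _; exact Nat.zero_le _
          · intro p _
            have := hball (A p) (g B0 p)
            rwa [Set.ncard_eq_toFinset_card'] at this
      _ = φ ^ (∑ p, g B0 p) := Finset.prod_pow_eq_pow_sum _ _ _
      _ = φ ^ h := by rw [hsum]
  have hTcard : T.card ≤ (T.image g).card * φ ^ h := by
    rw [Finset.card_eq_sum_card_fiberwise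
      (fun B hB => Finset.mem_image_of_mem g hB)]
    calc ∑ f ∈ T.image g, (T.filter (fun B => g B = f)).card
        ≤ ∑ _f ∈ T.image g, φ ^ h := Finset.sum_le_sum hfib
      _ = (T.image g).card * φ ^ h := by rw [Finset.sum_const, smul_eq_mul]
  -- the image of g injects into Sym P h (stars and bars)
  have hcount : ∀ (f : P → ℕ) (q : P),
      Multiset.count q (∑ p, Multiset.replicate (f p) p) = f q := by
    intro f q
    rw [Multiset.count_sum']
    simp [Multiset.count_replicate]
  have hcardsum : ∀ (f : P → ℕ),
      Multiset.card (∑ p, Multiset.replicate (f p) p) = ∑ p, f p := by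
    intro f
    have : ∀ s : Finset P,
        Multiset.card (∑ p ∈ s, Multiset.replicate (f p) p) = ∑ p ∈ s, f p := by
      intro s
      induction s using Finset.induction_on with
      | empty => simp
      | insert _ _ hns ih => simp [Finset.sum_insert hns, ih]
    exact this Finset.univ
  have himg : (T.image g).card ≤ Fintype.card (Sym P h) := by
    have hmem : ∀ f ∈ T.image g,
        (∑ p, Multiset.replicate (f p) p)
          ∈ (Finset.univ : Finset (Sym P h)).image Sym.toMultiset := by
      intro f hf
      obtain ⟨B0, hB0, rfl⟩ := Finset.mem_image.mp hf
      have hsum : ∑ p, g B0 p = h := (Finset.mem_filter.mp hB0).2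
      refine Finset.mem_image.mpr ⟨⟨∑ p, Multiset.replicate (g B0 p) p, ?_⟩,
        Finset.mem_univ _, rfl⟩
      rw [hcardsum]; exact hsum
    calc (T.image g).card
        ≤ ((Finset.univ : Finset (Sym P h)).image Sym.toMultiset).card := by
          apply Finset.card_le_card_of_injOn
            (fun f => ∑ p, Multiset.replicate (f p) p) (fun f hf => hmem f hf)
          intro f₁ _ f₂ _ hf
          funext q
          have := congrArg (Multiset.count q) hf
          rwa [hcount, hcount] at this
      _ ≤ (Finset.univ : Finset (Sym P h)).card := Finset.card_image_le
      _ = Fintype.card (Sym P h) := rfl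
  -- the numeric bound
  have hsym : Fintype.card (Sym P h) = (h + k - 1).choose h := by
    rw [Sym.card_sym_eq_choose, hcard, Nat.add_comm k h]
  have hnat : ({B : P → V | Function.Injective B ∧ ∑ p, gdist E (A p) (B p) = h}).ncard
      ≤ (h + k - 1).choose h * φ ^ h := by
    calc _ ≤ T.card := h1
      _ ≤ (T.image g).card * φ ^ h := hTcard
      _ ≤ (h + k - 1).choose h * φ ^ h := by
          apply Nat.mul_le_mul_right
          rw [← hsym]; exact himg
  -- cast to ℝ and identify the binomial coefficient with the factorial ratio
  have hchoose : ((h + k - 1).choose h : ℝ)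
      = (Nat.factorial (h + k - 1) : ℝ) /
          ((Nat.factorial h : ℝ) * (Nat.factorial (k - 1) : ℝ)) := by
    have hle : h ≤ h + k - 1 := Nat.le_pred_of_lt (Nat.lt_add_of_pos_right hk)
    have := Nat.choose_mul_factorial_mul_factorial hle
    have hkk : h + k - 1 - h = k - 1 := by
      rw [Nat.sub_right_comm, Nat.add_sub_cancel_left]
    rw [hkk] at this
    have hcast : ((h + k - 1).choose h : ℝ) * (Nat.factorial h : ℝ)
        * (Nat.factorial (k - 1) : ℝ) = (Nat.factorial (h + k - 1) : ℝ) := by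
      exact_mod_cast this
    field_simp
    linarith [hcast]
  calc (({B : P → V | Function.Injective B ∧ ∑ p, gdist E (A p) (B p) = h}.ncard : ℝ))
      ≤ (((h + k - 1).choose h * φ ^ h : ℕ) : ℝ) := by exact_mod_cast hnat
    _ = ((h + k - 1).choose h : ℝ) * (φ : ℝ) ^ h := by push_cast; ring
    _ = _ := by rw [hchoose]
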